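/- Suppose γ₁ < γ₂. Then χ ≤ ( I(A;𝒬)/(2λ·|𝒬|) − B·γ₁ ) / ( γ₂ − γ₁ ). -/

import Mathlib

open Finset

theorem stmt_5
    {ι : Type*} [Fintype ι] [DecidableEq ι]
    (s : ι → ι → ℝ)
    (hs : ∀ i j, s i j ∈ Set.Icc (0:ℝ) 1)
    (hsymm : ∀ i j, s i j = s j i)
    (hself : ∀ i, s i i = 1)
    (T U Q : Finset ι)
    (hTU : Disjoint T U) (hTQ : Disjoint T Q) (hUQ : Disjoint U Q)
    (hQ : Q.Nonempty)
    (A : Finset ι) (hA : A.Nonempty) (hAsub : A ⊆ T ∪ U)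
    (γ₁ Δ₁ γ₂ Δ₂ : ℝ)
    (hγ₁ : ∀ i ∈ U, ∀ j ∈ Q, γ₁ ≤ s i j)
    (hΔ₁ : ∀ i ∈ U, ∀ j ∈ Q, s i j ≤ Δ₁)
    (hγ₂ : ∀ i ∈ T, ∀ j ∈ Q, γ₂ ≤ s i j)
    (hΔ₂ : ∀ i ∈ T, ∀ j ∈ Q, s i j ≤ Δ₂)
    (lam : ℝ) (hlam : 0 < lam)
    (I : ℝ)
    (hI : I = 2 * lam * ∑ i ∈ A, ∑ j ∈ Q, s i j)
    (hγ : γ₁ < γ₂) :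
    ((A ∩ T).card : ℝ) ≤
      (I / (2 * lam * (Q.card : ℝ)) - (A.card : ℝ) * γ₁) / (γ₂ - γ₁) := by
  have hQ0 : (0:ℝ) < (Q.card : ℝ) := by
    exact_mod_cast hQ.card_pos
  have hsplit : A = (A ∩ T) ∪ (A ∩ U) := by
    ext x
    simp only [mem_union, mem_inter]
    constructor
    · intro hx
      rcases mem_union.mp (hAsub hx) with h | h
      · exact Or.inl ⟨hx, h⟩
      · exact Or.inr ⟨hx, h⟩
    · rintro (⟨h, _⟩ | ⟨h, _⟩) <;> exact h
  have hdisj : Disjoint (A ∩ T) (A ∩ U) :=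
    (hTU.mono inter_subset_right inter_subset_right)
  have hsum : ∑ i ∈ A, ∑ j ∈ Q, s i j =
      (∑ i ∈ A ∩ T, ∑ j ∈ Q, s i j) + (∑ i ∈ A ∩ U, ∑ j ∈ Q, s i j) := by
    conv_lhs => rw [hsplit]
    exact Finset.sum_union hdisj
  have h1 : ((A ∩ T).card : ℝ) * (γ₂ * Q.card) ≤ ∑ i ∈ A ∩ T, ∑ j ∈ Q, s i j := by
    have := Finset.card_nsmul_le_sum (A ∩ T) (fun i => ∑ j ∈ Q, s i j) (γ₂ * Q.card)
      (fun i hi => by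
        have := Finset.card_nsmul_le_sum Q (fun j => s i j) γ₂
          (fun j hj => hγ₂ i (mem_inter.mp hi).2 j hj)
        simpa [nsmul_eq_mul, mul_comm] using this)
    simpa [nsmul_eq_mul] using this
  have h2 : ((A ∩ U).card : ℝ) * (γ₁ * Q.card) ≤ ∑ i ∈ A ∩ U, ∑ j ∈ Q, s i j := by
    have := Finset.card_nsmul_le_sum (A ∩ U) (fun i => ∑ j ∈ Q, s i j) (γ₁ * Q.card)
      (fun i hi => by
        have := Finset.card_nsmul_le_sum Q (fun j => s i j) γ₁
          (fun j hj => hγ₁ i (mem_inter.mp hi).2 j hj)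
        simpa [nsmul_eq_mul, mul_comm] using this)
    simpa [nsmul_eq_mul] using this
  have hcard : ((A ∩ T).card : ℝ) + ((A ∩ U).card : ℝ) = (A.card : ℝ) := by
    rw [← Nat.cast_add, ← Finset.card_union_of_disjoint hdisj, ← hsplit]
  have hIdiv : I / (2 * lam * (Q.card : ℝ)) =
      (∑ i ∈ A, ∑ j ∈ Q, s i j) / (Q.card : ℝ) := by
    rw [hI]
    rw [mul_div_mul_left _ _ (by positivity : (2 * lam) ≠ 0)]
  rw [hIdiv, le_div_iff₀ (by linarith : (0:ℝ) < γ₂ - γ₁), le_sub_iff_add_le,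
    le_div_iff₀ hQ0]
  rw [← hcard, hsum]
  nlinarith [h1, h2]
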